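/- If C, C' ∈ ch^q_F(A) and C ⪯ C' (i.e. C' ⊆ tilde(C)), then h_q(X_C ∩ F^q) ≤ h_q(X_{C'} ∩ F^q), where h_q(X ∩ F^q) denotes the value of h_q at the unique point of X ∩ F^q. -/

import Mathlib

open Set

namespace IY

/-- An affine hyperplane arrangement in `ℝ^ℓ`, given by `n` affine-linear forms
with nonzero linear parts; the `i`-th hyperplane is the zero set of `α i`. -/
structure Arrangement (ℓ n : ℕ) where
  α : Fin n → ((Fin ℓ → ℝ) →ᵃ[ℝ] ℝ)
  nonzero : ∀ i, (α i).linear ≠ 0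

namespace Arrangement

variable {ℓ n : ℕ} (A : Arrangement ℓ n)

/-- The hyperplane `H_i = {α_i = 0}`. -/
def H (i : Fin n) : Set (Fin ℓ → ℝ) := {x | A.α i x = 0}

/-- The real complement of the subarrangement indexed by `s`. -/
def compOn (s : Set (Fin n)) : Set (Fin ℓ → ℝ) := {x | ∀ i ∈ s, A.α i x ≠ 0}

/-- Chambers of the subarrangement indexed by `s` : connected components of its
real complement. -/
def IsChamberOn (s : Set (Fin n)) (C : Set (Fin ℓ → ℝ)) : Prop :=
  ∃ x ∈ A.compOn s, C = connectedComponentIn (A.compOn s) x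

/-- Chambers of the full arrangement. -/
def IsChamber (C : Set (Fin ℓ → ℝ)) : Prop := A.IsChamberOn Set.univ C

/-- The intersection poset of the subarrangement indexed by `s` : nonempty
intersections of subfamilies (the empty intersection giving `ℝ^ℓ`). -/
def LOn (s : Set (Fin n)) (X : Set (Fin ℓ → ℝ)) : Prop :=
  X.Nonempty ∧ ∃ t : Set (Fin n), t ⊆ s ∧ X = ⋂ i ∈ t, A.H i

/-- The intersection poset `L(A)`. -/
def L (X : Set (Fin ℓ → ℝ)) : Prop := A.LOn Set.univ X

/-- The real part of a point of `ℂ^ℓ`. -/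
def reP {ℓ : ℕ} (z : Fin ℓ → ℂ) : Fin ℓ → ℝ := fun j => (z j).re

/-- The imaginary part of a point of `ℂ^ℓ`. -/
def imP {ℓ : ℕ} (z : Fin ℓ → ℂ) : Fin ℓ → ℝ := fun j => (z j).im

/-- The point `x + iv` of `ℂ^ℓ`. -/
def mkC {ℓ : ℕ} (x v : Fin ℓ → ℝ) : Fin ℓ → ℂ := fun j => ⟨x j, v j⟩

/-- The complexified complement `M(A) = ℂ^ℓ \ ⋃ H_ℂ`; a point `x + iv` lies on
`H_ℂ = {α_ℂ = 0}` iff `α(x) = 0` and the linear part of `α` kills `v`. -/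
def M : Set (Fin ℓ → ℂ) :=
  {z | ∀ i : Fin n, ¬(A.α i (reP z) = 0 ∧ (A.α i).linear (imP z) = 0)}

end Arrangement

/-- Dimension of a subset of `ℝ^ℓ` (for affine subspaces, their dimension). -/
noncomputable def dimS {ℓ : ℕ} (X : Set (Fin ℓ → ℝ)) : ℕ :=
  Module.finrank ℝ (affineSpan ℝ X).direction

/-- The direction `τ(X)` of (the affine span of) a subset of `ℝ^ℓ`. -/
noncomputable def tau {ℓ : ℕ} (X : Set (Fin ℓ → ℝ)) : Submodule ℝ (Fin ℓ → ℝ) :=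
  (affineSpan ℝ X).direction

/-- A flag in `ℝ^ℓ` given by defining affine-linear forms `h_1, …, h_ℓ`
(0-indexed: `h j` is the form `h_{j+1}`). -/
structure Flag (ℓ : ℕ) where
  h : Fin ℓ → ((Fin ℓ → ℝ) →ᵃ[ℝ] ℝ)

namespace Flag

variable {ℓ : ℕ} (𝓕 : Flag ℓ)

/-- The flag subspace `F^q = {h_{q+1} = ⋯ = h_ℓ = 0}`. -/
def F (q : ℕ) : Set (Fin ℓ → ℝ) := {x | ∀ j : Fin ℓ, q ≤ (j : ℕ) → 𝓕.h j x = 0}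

/-- `𝓕.hq q` is the form `h_q` in 1-indexed notation (junk value `0` out of range). -/
noncomputable def hq (q : ℕ) : (Fin ℓ → ℝ) →ᵃ[ℝ] ℝ :=
  if hlt : q - 1 < ℓ then 𝓕.h ⟨q - 1, hlt⟩ else 0

end Flag

/-- Genericity of the flag: for every `X ∈ L(A)`, `F^q ∩ X` is an affine subspace
of dimension `q + dim X - ℓ`, empty when `q + dim X < ℓ`. -/
def GenericFlag {ℓ n : ℕ} (A : Arrangement ℓ n) (𝓕 : Flag ℓ) : Prop :=
  ∀ X, A.L X → ∀ q, q ≤ ℓ →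
    (ℓ ≤ q + dimS X →
      ∃ W : AffineSubspace ℝ (Fin ℓ → ℝ), (W : Set (Fin ℓ → ℝ)).Nonempty ∧
        (W : Set (Fin ℓ → ℝ)) = 𝓕.F q ∩ X ∧
        Module.finrank ℝ W.direction = q + dimS X - ℓ) ∧
    (q + dimS X < ℓ → 𝓕.F q ∩ X = ∅)

/-- Condition (1) of the Assumption, for the subarrangement indexed by `s`:
if a chamber `C` meets `F^q` but not `F^{q-1}`, then `h_q > 0` on `C ∩ F^q`. -/
def Cond1On {ℓ n : ℕ} (A : Arrangement ℓ n) (s : Set (Fin n)) (𝓕 : Flag ℓ) : Prop :=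
  ∀ q : ℕ, 1 ≤ q → q ≤ ℓ → ∀ C, A.IsChamberOn s C →
    (C ∩ 𝓕.F q).Nonempty → C ∩ 𝓕.F (q - 1) = ∅ →
    ∀ x ∈ C ∩ 𝓕.F q, 0 < 𝓕.hq q x

/-- Condition (2) of the Assumption, for the subarrangement indexed by `s`:
distinct `X, X'` in the intersection poset of dimension `ℓ - q` have different
`h_q`-values at their intersection points with `F^q`. -/
def Cond2On {ℓ n : ℕ} (A : Arrangement ℓ n) (s : Set (Fin n)) (𝓕 : Flag ℓ) : Prop :=
  ∀ q : ℕ, 1 ≤ q → q ≤ ℓ → ∀ X X', A.LOn s X → A.LOn s X' →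
    dimS X = ℓ - q → dimS X' = ℓ - q → X ≠ X' →
    ∀ p ∈ X ∩ 𝓕.F q, ∀ p' ∈ X' ∩ 𝓕.F q, 𝓕.hq q p ≠ 𝓕.hq q p'

/-- `C ∈ ch^q_F(A)` : `C` is a chamber meeting `F^q` but not `F^{q-1}`
(the latter condition being empty for `q = 0`, since `F^{-1} = ∅`). -/
def ChF {ℓ n : ℕ} (A : Arrangement ℓ n) (𝓕 : Flag ℓ) (q : ℕ)
    (C : Set (Fin ℓ → ℝ)) : Prop :=
  A.IsChamber C ∧ (C ∩ 𝓕.F q).Nonempty ∧ (q = 0 ∨ C ∩ 𝓕.F (q - 1) = ∅)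

/-- `X = X_C` for `C ∈ ch^q_F(A)` : `X ∈ L(A)` has dimension `ℓ - q` and meets
`F^q` exactly in the unique minimum point of `h_q` on the closure of `C ∩ F^q`. -/
def IsXC {ℓ n : ℕ} (A : Arrangement ℓ n) (𝓕 : Flag ℓ) (q : ℕ)
    (C X : Set (Fin ℓ → ℝ)) : Prop :=
  A.L X ∧ dimS X = ℓ - q ∧
  ∃ p : Fin ℓ → ℝ, X ∩ 𝓕.F q = {p} ∧ p ∈ closure (C ∩ 𝓕.F q) ∧
    ∀ y ∈ closure (C ∩ 𝓕.F q), 𝓕.hq q p ≤ 𝓕.hq q y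

/-- Indices of the hyperplanes parallel to `X`, i.e. `A_{[X]} = {H : τ(X) ⊆ τ(H)}`. -/
def parIdx {ℓ n : ℕ} (A : Arrangement ℓ n) (X : Set (Fin ℓ → ℝ)) : Set (Fin n) :=
  {i | tau X ≤ LinearMap.ker (A.α i).linear}

/-- `H_i ∈ Sep(C, C')` : the hyperplane `H_i` separates the chambers `C` and `C'`. -/
def SepCh {ℓ n : ℕ} (A : Arrangement ℓ n) (C C' : Set (Fin ℓ → ℝ)) (i : Fin n) : Prop :=
  ((∀ x ∈ C, 0 < A.α i x) ∧ (∀ y ∈ C', A.α i y < 0)) ∨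
  ((∀ x ∈ C, A.α i x < 0) ∧ (∀ y ∈ C', 0 < A.α i y))

/-- `H_i ∈ Sep(p₁, p₂)` : the hyperplane `H_i` meets the segment `[p₁, p₂]`. -/
def SepPt {ℓ n : ℕ} (A : Arrangement ℓ n) (p₁ p₂ : Fin ℓ → ℝ) (i : Fin n) : Prop :=
  ∃ w ∈ segment ℝ p₁ p₂, A.α i w = 0

/-- The piece `S(C)` attached to a chamber with `τ(X_C) = T` and base point `p`:
all `x + iv` with `v ∈ T` and `v ∉ τ(H)` for every `H ∈ Sep(p, x)`. -/
def S {ℓ n : ℕ} (A : Arrangement ℓ n) (T : Submodule ℝ (Fin ℓ → ℝ))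
    (p : Fin ℓ → ℝ) : Set (Fin ℓ → ℂ) :=
  {z | Arrangement.imP z ∈ T ∧
    ∀ i : Fin n, SepPt A p (Arrangement.reP z) i →
      (A.α i).linear (Arrangement.imP z) ≠ 0}

end IY

namespace IY
open Arrangement


/-- On a chamber of a subarrangement, each defining form of the subarrangement has
constant (nonzero) sign: the product of its values at two points is positive. -/
lemma chamber_sign {ℓ n : ℕ} (A : Arrangement ℓ n) (s : Set (Fin n))
    {D : Set (Fin ℓ → ℝ)} (hD : A.IsChamberOn s D) {i : Fin n} (hi : i ∈ s)
    {a b : Fin ℓ → ℝ} (ha : a ∈ D) (hb : b ∈ D) : 0 < A.α i a * A.α i b := by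
  obtain ⟨x, hx, rfl⟩ := hD
  have hsub : connectedComponentIn (A.compOn s) x ⊆ A.compOn s :=
    connectedComponentIn_subset _ _
  have hne : ∀ w ∈ connectedComponentIn (A.compOn s) x, A.α i w ≠ 0 :=
    fun w hw => hsub hw i hi
  have hcont : ContinuousOn (fun w => A.α i w) (connectedComponentIn (A.compOn s) x) :=
    (A.α i).continuous_of_finiteDimensional.continuousOn
  by_contra hcon
  push_neg at hcon
  rcases mul_nonpos_iff.mp hcon with ⟨h1, h2⟩ | ⟨h1, h2⟩
  · obtain ⟨c, hc, hc0⟩ := isPreconnected_connectedComponentIn.intermediate_value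
      hb ha hcont ⟨h2, h1⟩
    exact hne c hc hc0
  · obtain ⟨c, hc, hc0⟩ := isPreconnected_connectedComponentIn.intermediate_value
      ha hb hcont ⟨h1, h2⟩
    exact hne c hc hc0

/-- If `C, C' ∈ ch^q_F(A)` and `C ⪯ C'` (i.e. `C' ⊆ tilde(C)`),
then `h_q(X_C ∩ F^q) ≤ h_q(X_{C'} ∩ F^q)`. -/
theorem order_implies_height_le (ℓ n : ℕ) (A : Arrangement ℓ n) (𝓕 : Flag ℓ)
    (hind : LinearIndependent ℝ fun j : Fin ℓ => (𝓕.h j).linear)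
    (hgen : GenericFlag A 𝓕)
    (h1 : Cond1On A Set.univ 𝓕) (h2 : Cond2On A Set.univ 𝓕)
    (q : ℕ) (hq2 : q ≤ ℓ)
    (C C' X X' : Set (Fin ℓ → ℝ)) (p p' : Fin ℓ → ℝ)
    (hC : ChF A 𝓕 q C) (hC' : ChF A 𝓕 q C')
    (hX : IsXC A 𝓕 q C X) (hX' : IsXC A 𝓕 q C' X')
    (hp : X ∩ 𝓕.F q = {p}) (hp' : X' ∩ 𝓕.F q = {p'})
    (Ct : Set (Fin ℓ → ℝ)) (hCt : A.IsChamberOn (parIdx A X) Ct) (hCCt : C ⊆ Ct)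
    (hprec : C' ⊆ Ct) :
    𝓕.hq q p ≤ 𝓕.hq q p' := by
  classical
  obtain ⟨hLX, hdimX, p₀, hsing, hpcl, hmin⟩ := hX
  obtain ⟨hLX', hdimX', p₀', hsing', hpcl', hmin'⟩ := hX'
  have hpp : p₀ = p := Set.singleton_eq_singleton_iff.mp (hsing.symm.trans hp)
  have hpp' : p₀' = p' := Set.singleton_eq_singleton_iff.mp (hsing'.symm.trans hp')
  rw [hpp] at hsing hpcl hmin
  rw [hpp'] at hsing' hpcl' hmin'
  have hpmem : p ∈ X ∩ 𝓕.F q := by rw [hp]; rfl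
  have hpX : p ∈ X := hpmem.1
  have hpF : p ∈ 𝓕.F q := hpmem.2
  -- base point of C
  obtain ⟨x₀, hx₀C, hx₀F⟩ := hC.2.1
  have hCh : A.IsChamberOn Set.univ C := hC.1
  have hCsub : C ⊆ A.compOn Set.univ := by
    obtain ⟨x, hx, rfl⟩ := hCh; exact connectedComponentIn_subset _ _
  set c : Fin n → ℝ := fun i => A.α i x₀ with hc
  have hc0 : ∀ i, c i ≠ 0 := fun i => hCsub hx₀C i (Set.mem_univ i)
  -- constant signs on C
  have hsignC : ∀ i, ∀ w ∈ C, 0 < c i * A.α i w :=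
    fun i w hw => chamber_sign A Set.univ hCh (Set.mem_univ i) hx₀C hw
  -- p in closure of C, hence nonneg signs at p
  have hpclC : p ∈ closure C :=
    closure_mono Set.inter_subset_left hpcl
  have hcont : ∀ i : Fin n, Continuous fun w => A.α i w :=
    fun i => (A.α i).continuous_of_finiteDimensional
  have cp_nonneg : ∀ i, 0 ≤ c i * A.α i p := by
    intro i
    have hcl : closure C ⊆ {w | 0 ≤ c i * A.α i w} :=
      closure_minimal (fun w hw => (hsignC i w hw).le)
        (isClosed_le continuous_const (continuous_const.mul (hcont i)))
    exact hcl hpclC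
  -- hyperplanes not parallel to X do not pass through p
  have hnotzero : ∀ i, i ∉ parIdx A X → A.α i p ≠ 0 := by
    intro i hip h0
    obtain ⟨hXne, t, -, hXeq⟩ := hLX
    set Y : Set (Fin ℓ → ℝ) := X ∩ A.H i with hYdef
    have hpY : p ∈ Y := ⟨hpX, h0⟩
    have hLY : A.L Y := by
      refine ⟨⟨p, hpY⟩, insert i t, Set.subset_univ _, ?_⟩
      rw [Set.biInter_insert, ← hXeq, Set.inter_comm]
    have hτle : tau Y ≤ tau X :=
      AffineSubspace.direction_le (affineSpan_mono ℝ Set.inter_subset_left)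
    have hdY_le : dimS Y ≤ dimS X := Submodule.finrank_mono hτle
    have hτker : tau Y ≤ LinearMap.ker (A.α i).linear := by
      rw [tau, direction_affineSpan, vectorSpan_def]
      rw [Submodule.span_le]
      rw [Set.vsub_subset_iff]
      intro u hu v hv
      have hu0 : A.α i u = 0 := hu.2
      have hv0 : A.α i v = 0 := hv.2
      have : (A.α i).linear (u -ᵥ v) = A.α i u -ᵥ A.α i v :=
        AffineMap.linearMap_vsub _ _ _
      simp only [SetLike.mem_coe, LinearMap.mem_ker]
      rw [this, hu0, hv0]
      simp
    have hdY_ne : dimS Y ≠ dimS X := by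
      intro he
      have heq : tau Y = tau X :=
        Submodule.eq_of_le_of_finrank_le hτle (le_of_eq he.symm)
      exact hip (by rw [parIdx, Set.mem_setOf_eq, ← heq]; exact hτker)
    have hdY_lt : dimS Y < ℓ - q := hdimX ▸ lt_of_le_of_ne hdY_le hdY_ne
    have hlow : q + dimS Y < ℓ := by omega
    have hempty := (hgen Y hLY q hq2).2 hlow
    have : p ∈ 𝓕.F q ∩ Y := ⟨hpF, hpY⟩
    rw [hempty] at this
    exact this
  -- strict positive signs at p for non-parallel hyperplanes
  have cp_pos : ∀ i, i ∉ parIdx A X → 0 < c i * A.α i p := by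
    intro i hip
    exact lt_of_le_of_ne (cp_nonneg i)
      (Ne.symm (mul_ne_zero (hc0 i) (hnotzero i hip)))
  -- Main claim: h_q p ≤ h_q y for every y ∈ C' ∩ F^q
  have claim : ∀ y ∈ C' ∩ 𝓕.F q, 𝓕.hq q p ≤ 𝓕.hq q y := by
    rintro y ⟨hyC', hyF⟩
    have hyCt : y ∈ Ct := hprec hyC'
    have hx₀Ct : x₀ ∈ Ct := hCCt hx₀C
    have hsignY : ∀ i ∈ parIdx A X, 0 < c i * A.α i y :=
      fun i hi => chamber_sign A (parIdx A X) hCt hi hx₀Ct hyCt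
    -- the open condition for non-parallel hyperplanes
    set U : Set (Fin ℓ → ℝ) :=
      ⋂ i : Fin n, (if i ∈ parIdx A X then Set.univ else {w | 0 < c i * A.α i w}) with hU
    have hUopen : IsOpen U := by
      apply isOpen_iInter_of_finite
      intro i
      split
      · exact isOpen_univ
      · exact isOpen_lt continuous_const (continuous_const.mul (hcont i))
    have hpU : p ∈ U := by
      rw [hU]
      refine Set.mem_iInter.mpr fun i => ?_
      split
      · trivial
      · next hip => exact cp_pos i hip
    have hgcont : Continuous fun t : ℝ => AffineMap.lineMap p y t :=
      (AffineMap.lineMap (k := ℝ) p y).continuous_of_finiteDimensional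
    have hpre : IsOpen ((fun t : ℝ => AffineMap.lineMap p y t) ⁻¹' U) :=
      hUopen.preimage hgcont
    have h0pre : (0 : ℝ) ∈ (fun t : ℝ => AffineMap.lineMap p y t) ⁻¹' U := by
      simp only [Set.mem_preimage, AffineMap.lineMap_apply_zero]
      exact hpU
    obtain ⟨δ, hδpos, hball⟩ := Metric.isOpen_iff.mp hpre 0 h0pre
    set ε : ℝ := min (δ / 2) (1 / 2) with hε
    have hε0 : 0 < ε := lt_min (by linarith) (by norm_num)
    have hε1 : ε < 1 := lt_of_le_of_lt (min_le_right _ _) (by norm_num)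
    have hεδ : ε < δ := lt_of_le_of_lt (min_le_left _ _) (by linarith)
    set z : Fin ℓ → ℝ := AffineMap.lineMap p y ε with hz
    have hzU : z ∈ U := by
      apply hball
      rw [Metric.mem_ball, Real.dist_eq, sub_zero, abs_of_pos hε0]
      exact hεδ
    have key : ∀ f : (Fin ℓ → ℝ) →ᵃ[ℝ] ℝ, f z = (1 - ε) * f p + ε * f y := by
      intro f
      rw [hz, AffineMap.apply_lineMap, AffineMap.lineMap_apply_module]
      simp [smul_eq_mul]
    -- strict positive signs at z for all hyperplanes
    have hsignZ : ∀ i, 0 < c i * A.α i z := by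
      intro i
      by_cases hi : i ∈ parIdx A X
      · rw [key (A.α i)]
        have h1 := cp_nonneg i
        have h2 := hsignY i hi
        nlinarith [mul_pos hε0 h2, mul_nonneg (sub_nonneg.mpr hε1.le) h1]
      · have := Set.mem_iInter.mp hzU i
        rw [if_neg hi] at this
        exact this
    -- z belongs to C
    have hzC : z ∈ C := by
      obtain ⟨xb, hxb, hCeq⟩ := hCh
      have hx₀mem : x₀ ∈ connectedComponentIn (A.compOn Set.univ) xb := hCeq ▸ hx₀C
      have hCeq' : C = connectedComponentIn (A.compOn Set.univ) x₀ := by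
        rw [hCeq, connectedComponentIn_eq hx₀mem]
      set J : Set (Fin ℓ → ℝ) :=
        ⇑(AffineMap.lineMap x₀ z) '' Set.Icc (0:ℝ) 1 with hJ
      have hlc : Continuous ⇑(AffineMap.lineMap x₀ z : ℝ →ᵃ[ℝ] (Fin ℓ → ℝ)) :=
        AffineMap.continuous_of_finiteDimensional _
      have hJpre : IsPreconnected J := isPreconnected_Icc.image _ hlc.continuousOn
      have hx₀J : x₀ ∈ J :=
        ⟨0, ⟨le_refl 0, zero_le_one⟩, AffineMap.lineMap_apply_zero _ _⟩
      have hzJ : z ∈ J :=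
        ⟨1, ⟨zero_le_one, le_refl 1⟩, AffineMap.lineMap_apply_one _ _⟩
      have hJsub : J ⊆ A.compOn Set.univ := by
        rintro w ⟨t, ⟨ht0, ht1⟩, rfl⟩ i -
        have hval : A.α i (AffineMap.lineMap x₀ z t) =
            (1 - t) * A.α i x₀ + t * A.α i z := by
          rw [AffineMap.apply_lineMap, AffineMap.lineMap_apply_module]
          simp [smul_eq_mul]
        have hx₀pos : 0 < c i * A.α i x₀ := hsignC i x₀ hx₀C
        have hzpos : 0 < c i * A.α i z := hsignZ i
        have hwpos : 0 < c i * A.α i (AffineMap.lineMap x₀ z t) := by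
          rw [hval]
          nlinarith [mul_nonneg ht0 (sub_nonneg.mpr (min_le_right (c i * A.α i x₀) (c i * A.α i z))),
            mul_nonneg (sub_nonneg.mpr ht1) (sub_nonneg.mpr (min_le_left (c i * A.α i x₀) (c i * A.α i z))),
            lt_min hx₀pos hzpos]
        intro h0
        rw [h0, mul_zero] at hwpos
        exact lt_irrefl 0 hwpos
      rw [hCeq']
      exact (hJpre.subset_connectedComponentIn hx₀J hJsub) hzJ
    -- z belongs to F^q
    have hzF : z ∈ 𝓕.F q := by
      intro j hj
      rw [key (𝓕.h j), hpF j hj, hyF j hj]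
      ring
    -- minimality at p
    have hminz := hmin z (subset_closure ⟨hzC, hzF⟩)
    rw [key (𝓕.hq q)] at hminz
    by_contra hlt
    push_neg at hlt
    nlinarith [mul_pos hε0 (sub_pos.mpr hlt)]
  -- pass to the closure
  have hclosed : IsClosed {w | 𝓕.hq q p ≤ 𝓕.hq q w} :=
    isClosed_le continuous_const (𝓕.hq q).continuous_of_finiteDimensional
  exact closure_minimal claim hclosed hpcl'

end IY
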